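/- (Global convergence of the PMM, items (a)-(b).) There exist z* ∈ ℝ^n solving the dual problem and w* ∈ ℝ^n with −w* ∈ ∂h1(z*) and w* ∈ ∂h2(z*), such that the PMM sequences satisfy (x_k, b_k) → (z*, w*), (y_k, −a_k) → (z*, w*) and (z_k, w_k) → (z*, w*) as k → ∞; in particular Mu_k+Cv_k−d → 0 and x_k−y_k → 0. -/

import Mathlib

open scoped RealInnerProductSpace

noncomputable section

/-- `w` is a subgradient of the extended-real-valued function `φ` at `x`. -/
def HasSubgrad {E : Type*} [NormedAddCommGroup E] [InnerProductSpace ℝ E]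
    (φ : E → EReal) (w x : E) : Prop :=
  ∀ x' : E, φ x + ((⟪w, x' - x⟫ : ℝ) : EReal) ≤ φ x'

/-- `w` is an `ε`-subgradient of `φ` at `x`. -/
def HasESubgrad {E : Type*} [NormedAddCommGroup E] [InnerProductSpace ℝ E]
    (φ : E → EReal) (ε : ℝ) (w x : E) : Prop :=
  ∀ x' : E, φ x + ((⟪w, x' - x⟫ : ℝ) : EReal) - (ε : EReal) ≤ φ x'

/-- Convexity for an extended-real-valued function. -/
def ConvexE {E : Type*} [NormedAddCommGroup E] [InnerProductSpace ℝ E]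
    (φ : E → EReal) : Prop :=
  ∀ x y : E, ∀ a b : ℝ, 0 ≤ a → 0 ≤ b → a + b = 1 →
    φ (a • x + b • y) ≤ (a : EReal) * φ x + (b : EReal) * φ y

/-- Proper closed convex function with values in `(-∞, ∞]`. -/
def IsPCC {E : Type*} [NormedAddCommGroup E] [InnerProductSpace ℝ E]
    (φ : E → EReal) : Prop :=
  (∀ x, φ x ≠ ⊥) ∧ (∃ x, φ x ≠ ⊤) ∧ LowerSemicontinuous φ ∧ ConvexE φ

/-- Fenchel conjugate. -/
def fconj {E : Type*} [NormedAddCommGroup E] [InnerProductSpace ℝ E]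
    (φ : E → EReal) (w : E) : EReal :=
  ⨆ x : E, ((⟪w, x⟫ : ℝ) : EReal) - φ x

/-- Lagrangian of `min { f u + g v : M u + C v = d }`. -/
def Lag {E₁ E₂ F : Type*} [NormedAddCommGroup E₁] [InnerProductSpace ℝ E₁]
    [NormedAddCommGroup E₂] [InnerProductSpace ℝ E₂]
    [NormedAddCommGroup F] [InnerProductSpace ℝ F]
    (f : E₁ → EReal) (g : E₂ → EReal) (M : E₁ →ₗ[ℝ] F) (C : E₂ →ₗ[ℝ] F) (d : F)
    (u : E₁) (v : E₂) (z : F) : EReal :=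
  f u + g v + ((⟪M u + C v - d, z⟫ : ℝ) : EReal)

/-- Saddle point of the Lagrangian. -/
def IsSaddle {E₁ E₂ F : Type*} [NormedAddCommGroup E₁] [InnerProductSpace ℝ E₁]
    [NormedAddCommGroup E₂] [InnerProductSpace ℝ E₂]
    [NormedAddCommGroup F] [InnerProductSpace ℝ F]
    (f : E₁ → EReal) (g : E₂ → EReal) (M : E₁ →ₗ[ℝ] F) (C : E₂ →ₗ[ℝ] F) (d : F)
    (us : E₁) (vs : E₂) (zs : F) : Prop :=
  Lag f g M C d us vs zs ≠ ⊤ ∧ Lag f g M C d us vs zs ≠ ⊥ ∧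
  (∀ u v, Lag f g M C d us vs zs ≤ Lag f g M C d u v zs) ∧
  (∀ ζ, Lag f g M C d us vs ζ ≤ Lag f g M C d us vs zs)

/-- `h₁(z) = f*(-M* z)`. -/
def hOne {E₁ F : Type*} [NormedAddCommGroup E₁] [InnerProductSpace ℝ E₁]
    [FiniteDimensional ℝ E₁] [NormedAddCommGroup F] [InnerProductSpace ℝ F]
    [FiniteDimensional ℝ F] (f : E₁ → EReal) (M : E₁ →ₗ[ℝ] F) (z : F) : EReal :=
  fconj f (-(LinearMap.adjoint M z))

/-- `h₂(z) = g*(-C* z) + ⟪d, z⟫`. -/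
def hTwo {E₂ F : Type*} [NormedAddCommGroup E₂] [InnerProductSpace ℝ E₂]
    [FiniteDimensional ℝ E₂] [NormedAddCommGroup F] [InnerProductSpace ℝ F]
    [FiniteDimensional ℝ F] (g : E₂ → EReal) (C : E₂ →ₗ[ℝ] F) (d : F) (z : F) : EReal :=
  fconj g (-(LinearMap.adjoint C z)) + ((⟪d, z⟫ : ℝ) : EReal)

/-- The extended solution set `S_e(∂h₁, ∂h₂)`. -/
def extSolSet {E₁ E₂ F : Type*} [NormedAddCommGroup E₁] [InnerProductSpace ℝ E₁]
    [FiniteDimensional ℝ E₁] [NormedAddCommGroup E₂] [InnerProductSpace ℝ E₂]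
    [FiniteDimensional ℝ E₂] [NormedAddCommGroup F] [InnerProductSpace ℝ F]
    [FiniteDimensional ℝ F]
    (f : E₁ → EReal) (g : E₂ → EReal) (M : E₁ →ₗ[ℝ] F) (C : E₂ →ₗ[ℝ] F) (d : F) :
    Set (F × F) :=
  {p | HasSubgrad (hOne f M) (-p.2) p.1 ∧ HasSubgrad (hTwo g C d) p.2 p.1}


section Helpers
variable {E F : Type*} [NormedAddCommGroup E] [InnerProductSpace ℝ E]
  [NormedAddCommGroup F] [InnerProductSpace ℝ F]

/-- extract real value -/
lemma ereal_real {a : EReal} (h1 : a ≠ ⊥) (h2 : a ≠ ⊤) : ∃ c : ℝ, a = c := by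
  induction a using EReal.rec with
  | bot => exact absurd rfl h1
  | coe c => exact ⟨c, rfl⟩
  | top => exact absurd rfl h2

lemma le_fconj (φ : E → EReal) (w x : E) : ((⟪w, x⟫ : ℝ) : EReal) - φ x ≤ fconj φ w :=
  le_iSup (fun x => ((⟪w, x⟫ : ℝ) : EReal) - φ x) x

lemma le_fconj' (φ : E → EReal) (w x : E) {c : ℝ} (hc : φ x = (c : EReal)) :
    ((⟪w, x⟫ - c : ℝ) : EReal) ≤ fconj φ w := by
  have := le_fconj φ w x
  rw [hc, ← EReal.coe_sub] at this
  exact this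

lemma fconj_ne_bot (φ : E → EReal) {x0 : E} {c0 : ℝ} (h0 : φ x0 = (c0 : EReal)) (w : E) :
    fconj φ w ≠ ⊥ := by
  have := le_fconj' φ w x0 h0
  intro h; rw [h, le_bot_iff] at this; exact (EReal.coe_ne_bot _) this

lemma ereal_tricho (a : EReal) : a = ⊥ ∨ a = ⊤ ∨ ∃ c : ℝ, a = c := by
  induction a using EReal.rec with
  | bot => exact Or.inl rfl
  | coe c => exact Or.inr (Or.inr ⟨c, rfl⟩)
  | top => exact Or.inr (Or.inl rfl)

lemma fconj_eq_of_subgrad (φ : E → EReal) (v0 p : E) (c : ℝ) (hc : φ v0 = (c : EReal))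
    (hsub : ∀ v', (c : EReal) + ((⟪p, v' - v0⟫ : ℝ) : EReal) ≤ φ v') :
    fconj φ p = ((⟪p, v0⟫ - c : ℝ) : EReal) := by
  refine le_antisymm (iSup_le fun v => ?_) (le_fconj' φ p v0 hc)
  have h := hsub v
  rcases ereal_tricho (φ v) with hv | hv | ⟨cv, hv⟩
  · rw [hv] at h
    rw [← EReal.coe_add] at h
    exact absurd h (by simp)
  · rw [hv, EReal.sub_top]
    exact bot_le
  · rw [hv] at h ⊢
    rw [← EReal.coe_add, EReal.coe_le_coe_iff] at h
    rw [← EReal.coe_sub, EReal.coe_le_coe_iff]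
    have : ⟪p, v - v0⟫ = ⟪p, v⟫ - ⟪p, v0⟫ := by rw [inner_sub_right]
    linarith


variable [FiniteDimensional ℝ E] [FiniteDimensional ℝ F]

lemma adj_inner (M : E →ₗ[ℝ] F) (z : F) (u : E) :
    ⟪-(LinearMap.adjoint M z), u⟫ = -⟪z, M u⟫ := by
  rw [inner_neg_left, LinearMap.adjoint_inner_left]

lemma hOne_val_subgrad (f : E → EReal) (M : E →ₗ[ℝ] F) (u0 : E) (y : F) (c : ℝ)
    (hc : f u0 = (c : EReal))
    (hsub : ∀ u', (c : EReal) + ((⟪y, M u0⟫ - ⟪y, M u'⟫ : ℝ) : EReal) ≤ f u') :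
    hOne f M y = ((-⟪y, M u0⟫ - c : ℝ) : EReal) ∧ HasSubgrad (hOne f M) (-(M u0)) y := by
  have hval : hOne f M y = ((-⟪y, M u0⟫ - c : ℝ) : EReal) := by
    have := fconj_eq_of_subgrad f u0 (-(LinearMap.adjoint M y)) c hc (fun u' => by
      have : (⟪-(LinearMap.adjoint M y), u' - u0⟫ : ℝ) = ⟪y, M u0⟫ - ⟪y, M u'⟫ := by
        rw [adj_inner, map_sub, inner_sub_right]; ring
      rw [this]; exact hsub u')
    rw [hOne, this, adj_inner]
  refine ⟨hval, fun ζ => ?_⟩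
  have hle : ((-⟪ζ, M u0⟫ - c : ℝ) : EReal) ≤ hOne f M ζ := by
    have := le_fconj' f (-(LinearMap.adjoint M ζ)) u0 hc
    rwa [adj_inner] at this
  rw [hval, ← EReal.coe_add]
  refine le_trans (le_of_eq ?_) hle
  norm_cast
  rw [inner_neg_left, inner_sub_right, real_inner_comm (M u0) y, real_inner_comm (M u0) ζ]
  ring

lemma hTwo_val_subgrad (g : E → EReal) (C : E →ₗ[ℝ] F) (d : F) (v0 : E) (x : F) (c : ℝ)
    (hc : g v0 = (c : EReal))
    (hsub : ∀ v', (c : EReal) + ((⟪x, C v0⟫ - ⟪x, C v'⟫ : ℝ) : EReal) ≤ g v') :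
    hTwo g C d x = ((⟪d, x⟫ - ⟪x, C v0⟫ - c : ℝ) : EReal) ∧
      HasSubgrad (hTwo g C d) (d - C v0) x := by
  have hval0 : fconj g (-(LinearMap.adjoint C x)) = ((-⟪x, C v0⟫ - c : ℝ) : EReal) := by
    have := fconj_eq_of_subgrad g v0 (-(LinearMap.adjoint C x)) c hc (fun v' => by
      have : (⟪-(LinearMap.adjoint C x), v' - v0⟫ : ℝ) = ⟪x, C v0⟫ - ⟪x, C v'⟫ := by
        rw [adj_inner, map_sub, inner_sub_right]; ring
      rw [this]; exact hsub v')
    rw [this, adj_inner]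
  have hval : hTwo g C d x = ((⟪d, x⟫ - ⟪x, C v0⟫ - c : ℝ) : EReal) := by
    rw [hTwo, hval0, ← EReal.coe_add]
    norm_cast
    ring
  refine ⟨hval, fun ζ => ?_⟩
  have hle : ((-⟪ζ, C v0⟫ - c + ⟪d, ζ⟫ : ℝ) : EReal) ≤ hTwo g C d ζ := by
    have h1 : ((-⟪ζ, C v0⟫ - c : ℝ) : EReal) ≤ fconj g (-(LinearMap.adjoint C ζ)) := by
      have := le_fconj' g (-(LinearMap.adjoint C ζ)) v0 hc
      rwa [adj_inner] at this
    rw [EReal.coe_add]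
    exact add_le_add_left h1 _
  rw [hval, ← EReal.coe_add]
  refine le_trans (le_of_eq ?_) hle
  norm_cast
  rw [inner_sub_left, inner_sub_right, inner_sub_right, real_inner_comm (C v0) x,
    real_inner_comm (C v0) ζ]
  ring

/-- monotonicity of subgradients at points with finite value -/
lemma subgrad_mono (φ : F → EReal) {x1 x2 w1 w2 : F} {c1 c2 : ℝ}
    (h1 : φ x1 = (c1 : EReal)) (h2 : φ x2 = (c2 : EReal))
    (s1 : HasSubgrad φ w1 x1) (s2 : HasSubgrad φ w2 x2) :
    0 ≤ ⟪x1 - x2, w1 - w2⟫ := by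
  have a1 := s1 x2
  have a2 := s2 x1
  rw [h1, h2, ← EReal.coe_add, EReal.coe_le_coe_iff] at a1
  rw [h2, h1, ← EReal.coe_add, EReal.coe_le_coe_iff] at a2
  have e1 : (⟪w1, x2 - x1⟫ : ℝ) = -⟪x1 - x2, w1⟫ := by
    rw [← neg_sub x1 x2, inner_neg_right, real_inner_comm]
  have e2 : (⟪w2, x1 - x2⟫ : ℝ) = ⟪x1 - x2, w2⟫ := real_inner_comm _ _
  rw [inner_sub_right]
  linarith

omit [FiniteDimensional ℝ E] [FiniteDimensional ℝ F] in
/-- From exact minimization of `g + ⟪p, C·-dd⟫ + (lam/2)‖C·-dd‖²` we get a subgradient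
inequality at the minimizer. -/
lemma key_min (g : E → EReal) (hbot : ∀ x, g x ≠ ⊥) (hconv : ConvexE g)
    (C : E →ₗ[ℝ] F) (dd p : F) (lam : ℝ) (hlam : 0 < lam) (v0 : E) (c : ℝ)
    (hc : g v0 = (c : EReal))
    (hmin : ∀ v', g v0 + ((⟪p, C v0 - dd⟫ + lam / 2 * ‖C v0 - dd‖ ^ 2 : ℝ) : EReal) ≤
      g v' + ((⟪p, C v' - dd⟫ + lam / 2 * ‖C v' - dd‖ ^ 2 : ℝ) : EReal)) :
    ∀ v', (c : EReal) + ((⟪p + lam • (C v0 - dd), C v0 - C v'⟫ : ℝ) : EReal) ≤ g v' := by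
  intro v'
  rcases ereal_tricho (g v') with hv | hv | ⟨cv, hv⟩
  · exact absurd hv (hbot v')
  · rw [hv]; exact le_top
  · rw [hv, ← EReal.coe_add, EReal.coe_le_coe_iff]
    -- key real inequality via convexity and t → 0
    have main : ∀ t : ℝ, 0 < t → t ≤ 1 →
        0 ≤ cv - c + ⟪p + lam • (C v0 - dd), C v' - C v0⟫ + t * (lam / 2 * ‖C v' - C v0‖ ^ 2) := by
      intro t ht ht1
      set vt := t • v' + (1 - t) • v0 with hvt
      have hconvt0 := hconv v' v0 t (1 - t) (le_of_lt ht) (by linarith) (by ring)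
      rw [hv, hc] at hconvt0
      have hconvt : g vt ≤ ((t * cv + (1 - t) * c : ℝ) : EReal) := by
        push_cast
        exact hconvt0
      have hmt := hmin vt
      rw [hc] at hmt
      have hgvt_ne_top : g vt ≠ ⊤ :=
        ne_top_of_le_ne_top (EReal.coe_ne_top _) hconvt
      obtain ⟨ct, hct⟩ := ereal_real (hbot vt) hgvt_ne_top
      rw [hct, EReal.coe_le_coe_iff] at hconvt
      rw [hct, ← EReal.coe_add, ← EReal.coe_add, EReal.coe_le_coe_iff] at hmt
      -- expand quadratic terms
      have hCvt : C vt - dd = (C v0 - dd) + t • (C v' - C v0) := by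
        rw [hvt, map_add, map_smul, map_smul]
        module
      have hQ : (⟪p, C vt - dd⟫ + lam / 2 * ‖C vt - dd‖ ^ 2 : ℝ) =
          ⟪p, C v0 - dd⟫ + lam / 2 * ‖C v0 - dd‖ ^ 2
            + t * ⟪p + lam • (C v0 - dd), C v' - C v0⟫
            + t ^ 2 * (lam / 2 * ‖C v' - C v0‖ ^ 2) := by
        rw [hCvt, norm_add_sq_real, inner_add_right, inner_smul_right, inner_add_left,
          real_inner_smul_left, norm_smul, real_inner_smul_right]
        simp [Real.norm_eq_abs]
        rw [mul_pow, sq_abs]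
        ring
      rw [hQ] at hmt
      nlinarith [hmt, hconvt]
    -- let t → 0
    by_contra hcon
    push_neg at hcon
    set K := cv - c + ⟪p + lam • (C v0 - dd), C v' - C v0⟫ with hK
    have hKneg : K < 0 := by
      have : (⟪p + lam • (C v0 - dd), C v0 - C v'⟫ : ℝ) = -⟪p + lam • (C v0 - dd), C v' - C v0⟫ := by
        rw [← neg_sub (C v') (C v0), inner_neg_right]
      linarith [hcon, this ▸ hcon]
    set L := lam / 2 * ‖C v' - C v0‖ ^ 2 with hL
    have hL0 : 0 ≤ L := by positivity
    rcases eq_or_lt_of_le hL0 with hL0' | hL0'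
    · have := main 1 one_pos le_rfl
      rw [← hL0'] at this
      linarith
    · have ht0 : (0:ℝ) < min 1 (-K / (2 * L)) := by
        apply lt_min one_pos
        apply div_pos (by linarith) (by linarith)
      have hmain := main _ ht0 (min_le_left _ _)
      have h2 : min 1 (-K / (2 * L)) * L ≤ (-K / (2 * L)) * L :=
        mul_le_mul_of_nonneg_right (min_le_right _ _) hL0
      have heq : (-K / (2 * L)) * L = -K / 2 := by
        field_simp
      linarith

omit [FiniteDimensional ℝ E] [FiniteDimensional ℝ F] in
/-- EReal helper: `a + ↑r ≤ ↑q` with `a ≠ ⊥` forces `a` real. -/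
lemma ereal_add_coe_le {a : EReal} {r q : ℝ} (hbot : a ≠ ⊥)
    (h : a + (r : EReal) ≤ (q : EReal)) : ∃ c : ℝ, a = c ∧ c + r ≤ q := by
  rcases ereal_tricho a with ha | ha | ⟨c, ha⟩
  · exact absurd ha hbot
  · rw [ha] at h
    rw [EReal.top_add_of_ne_bot (EReal.coe_ne_bot r)] at h
    exact absurd (top_le_iff.mp h) (EReal.coe_ne_top q)
  · rw [ha, ← EReal.coe_add, EReal.coe_le_coe_iff] at h
    exact ⟨c, ha, h⟩

omit [FiniteDimensional ℝ F] in
/-- limit of subgradients is a subgradient, given a lower-semicontinuity property at the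
limit point. -/
lemma subgrad_limit (φ : F → EReal) (hbot : ∀ x, φ x ≠ ⊥) {χ β : ℕ → F} {zl wl : F}
    (hχ : Filter.Tendsto χ Filter.atTop (nhds zl))
    (hβ : Filter.Tendsto β Filter.atTop (nhds wl))
    (hls : ∀ b : EReal, b < φ zl → ∀ᶠ j in Filter.atTop, b < φ (χ j))
    (hsub : ∀ j, HasSubgrad φ (β j) (χ j)) : HasSubgrad φ wl zl := by
  intro ζ
  rcases ereal_tricho (φ ζ) with hζ | hζ | ⟨q, hζ⟩
  · exact absurd hζ (hbot ζ)
  · rw [hζ]; exact le_top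
  · rw [hζ]
    -- each φ (χ j) ≤ q - ⟪β j, ζ - χ j⟫
    have hr : ∀ j, φ (χ j) ≤ ((q - ⟪β j, ζ - χ j⟫ : ℝ) : EReal) := by
      intro j
      have h := hsub j ζ
      rw [hζ] at h
      obtain ⟨c, hc, hcle⟩ := ereal_add_coe_le (hbot _) h
      rw [hc, EReal.coe_le_coe_iff]
      linarith
    have hrlim : Filter.Tendsto (fun j => q - ⟪β j, ζ - χ j⟫) Filter.atTop
        (nhds (q - ⟪wl, ζ - zl⟫)) := by
      apply Filter.Tendsto.const_sub
      exact Filter.Tendsto.inner hβ (Filter.Tendsto.const_sub _ hχ)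
    -- φ zl ≤ q - ⟪wl, ζ - zl⟫
    have hkey : φ zl ≤ ((q - ⟪wl, ζ - zl⟫ : ℝ) : EReal) := by
      by_contra hcon
      push_neg at hcon
      obtain ⟨b, hb1, hb2⟩ := exists_between hcon
      have hbne : b ≠ ⊥ := fun h => by
        rw [h] at hb1; exact absurd hb1 (by simp)
      have hbnt : b ≠ ⊤ := fun h => absurd (h ▸ hb2) not_top_lt
      obtain ⟨br, hbr⟩ := ereal_real hbne hbnt
      have hev := hls b hb2
      have hev2 : ∀ᶠ j in Filter.atTop, (br : EReal) < ((q - ⟪β j, ζ - χ j⟫ : ℝ) : EReal) := by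
        filter_upwards [hev] with j hj
        exact lt_of_lt_of_le (hbr ▸ hj) (hr j)
      have hev3 : ∀ᶠ j in Filter.atTop, br < q - ⟪β j, ζ - χ j⟫ := by
        filter_upwards [hev2] with j hj
        exact_mod_cast hj
      -- but the RHS tends to something < br
      have hlt : q - ⟪wl, ζ - zl⟫ < br := by
        rw [hbr] at hb1; exact_mod_cast hb1
      have hfin : ∀ᶠ j in Filter.atTop, q - ⟪β j, ζ - χ j⟫ < br :=
        hrlim.eventually_lt_const hlt
      obtain ⟨j, hj1, hj2⟩ := (hfin.and hev3).exists
      linarith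
    obtain ⟨c, hc, hcle⟩ : ∃ c : ℝ, φ zl = c ∧ c ≤ q - ⟪wl, ζ - zl⟫ := by
      rcases ereal_tricho (φ zl) with h | h | ⟨c, h⟩
      · exact absurd h (hbot zl)
      · rw [h] at hkey; exact absurd (top_le_iff.mp hkey) (EReal.coe_ne_top _)
      · rw [h, EReal.coe_le_coe_iff] at hkey; exact ⟨c, h, hkey⟩
    rw [hc, ← EReal.coe_add, EReal.coe_le_coe_iff]
    linarith

lemma hOne_lsc_at (f : E → EReal) (hbot : ∀ x, f x ≠ ⊥) (M : E →ₗ[ℝ] F) (z : F)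
    (b : EReal) (hb : b < hOne f M z) : ∀ᶠ z' in nhds z, b < hOne f M z' := by
  rcases ereal_tricho b with hbb | hbb | ⟨br, hbb⟩
  · subst hbb
    -- need hOne never ⊥ : get witness from hb
    rw [hOne, fconj, lt_iSup_iff] at hb
    obtain ⟨u0, hu0⟩ := hb
    rcases ereal_tricho (f u0) with h0 | h0 | ⟨c0, h0⟩
    · exact absurd h0 (hbot u0)
    · rw [h0, EReal.sub_top] at hu0; exact absurd hu0 (lt_irrefl _)
    · filter_upwards with z'
      refine lt_of_lt_of_le (bot_lt_iff_ne_bot.mpr ?_) (le_fconj' f _ u0 h0)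
      exact EReal.coe_ne_bot _
  · subst hbb; exact absurd hb not_top_lt
  · subst hbb
    rw [hOne, fconj, lt_iSup_iff] at hb
    obtain ⟨u0, hu0⟩ := hb
    rcases ereal_tricho (f u0) with h0 | h0 | ⟨c0, h0⟩
    · exact absurd h0 (hbot u0)
    · rw [h0, EReal.sub_top] at hu0; exact absurd hu0 (by simp)
    · rw [h0, ← EReal.coe_sub, EReal.coe_lt_coe_iff, adj_inner] at hu0
      have hcont : Continuous fun z' : F => -⟪z', M u0⟫ - c0 := by
        have : Continuous fun z' : F => (⟪z', M u0⟫ : ℝ) :=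
          continuous_id.inner continuous_const
        continuity
      have hev := (hcont.tendsto z).eventually_const_lt hu0
      filter_upwards [hev] with z' hz'
      calc (br : EReal) < ((-⟪z', M u0⟫ - c0 : ℝ) : EReal) := by exact_mod_cast hz'
        _ ≤ hOne f M z' := by
            have := le_fconj' f (-(LinearMap.adjoint M z')) u0 h0
            rwa [adj_inner] at this

lemma hTwo_lsc_at (g : E → EReal) (hbot : ∀ x, g x ≠ ⊥) {v0 : E} {c0 : ℝ} (hc0 : g v0 = (c0 : EReal))
    (C : E →ₗ[ℝ] F) (d : F) (z : F)
    (b : EReal) (hb : b < hTwo g C d z) : ∀ᶠ z' in nhds z, b < hTwo g C d z' := by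
  have hTwo_ge : ∀ z' : F, ∀ v1 : E, ∀ c1 : ℝ, g v1 = (c1 : EReal) →
      ((-⟪z', C v1⟫ - c1 + ⟪d, z'⟫ : ℝ) : EReal) ≤ hTwo g C d z' := by
    intro z' v1 c1 hc1
    rw [hTwo, EReal.coe_add]
    refine add_le_add_left ?_ _
    have := le_fconj' g (-(LinearMap.adjoint C z')) v1 hc1
    rwa [adj_inner] at this
  rcases ereal_tricho b with hbb | hbb | ⟨br, hbb⟩
  · subst hbb
    filter_upwards with z'
    refine lt_of_lt_of_le (bot_lt_iff_ne_bot.mpr ?_) (hTwo_ge z' v0 c0 hc0)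
    exact EReal.coe_ne_bot _
  · subst hbb; exact absurd hb not_top_lt
  · subst hbb
    have hb2 : ((br - ⟪d, z⟫ : ℝ) : EReal) < fconj g (-(LinearMap.adjoint C z)) := by
      rcases ereal_tricho (fconj g (-(LinearMap.adjoint C z))) with h | h | ⟨cF, h⟩
      · exact absurd h (fconj_ne_bot g hc0 _)
      · rw [h]; exact EReal.coe_lt_top _
      · rw [hTwo, h, ← EReal.coe_add, EReal.coe_lt_coe_iff] at hb
        rw [h, EReal.coe_lt_coe_iff]
        linarith
    rw [fconj, lt_iSup_iff] at hb2
    obtain ⟨v1, hv1⟩ := hb2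
    rcases ereal_tricho (g v1) with h1 | h1 | ⟨c1, h1⟩
    · exact absurd h1 (hbot v1)
    · rw [h1, EReal.sub_top] at hv1; exact absurd hv1 (by simp)
    · rw [h1, adj_inner, ← EReal.coe_sub, EReal.coe_lt_coe_iff] at hv1
      have hcont : Continuous fun z' : F => -⟪z', C v1⟫ - c1 + ⟪d, z'⟫ := by
        have h2 : Continuous fun z' : F => (⟪z', C v1⟫ : ℝ) :=
          continuous_id.inner continuous_const
        have h3 : Continuous fun z' : F => (⟪d, z'⟫ : ℝ) :=
          continuous_const.inner continuous_id
        continuity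
      have hlt : br < -⟪z, C v1⟫ - c1 + ⟪d, z⟫ := by linarith
      have hev := (hcont.tendsto z).eventually_const_lt hlt
      filter_upwards [hev] with z' hz'
      calc (br : EReal) < ((-⟪z', C v1⟫ - c1 + ⟪d, z'⟫ : ℝ) : EReal) := by exact_mod_cast hz'
        _ ≤ hTwo g C d z' := hTwo_ge z' v1 c1 h1

lemma hTwo_ne_bot (g : E → EReal) {v0 : E} {c0 : ℝ} (hc0 : g v0 = (c0 : EReal))
    (C : E →ₗ[ℝ] F) (d : F) (z : F) : hTwo g C d z ≠ ⊥ := by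
  rw [hTwo]
  intro h
  rcases ereal_tricho (fconj g (-(LinearMap.adjoint C z))) with hF | hF | ⟨cF, hF⟩
  · exact absurd hF (fconj_ne_bot g hc0 _)
  · rw [hF, EReal.top_add_of_ne_bot (EReal.coe_ne_bot _)] at h; exact absurd h (by simp)
  · rw [hF, ← EReal.coe_add] at h; exact absurd h (EReal.coe_ne_bot _)

omit [FiniteDimensional ℝ E] [FiniteDimensional ℝ F] in
lemma gamma_facts (lam γ : ℝ) (hlam : 0 < lam) (s t : F)
    (hden : 0 < ‖s - t‖ ^ 2 + lam ^ 2 * ‖t‖ ^ 2)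
    (hγdef : γ = lam * (‖s‖ ^ 2 + ‖t‖ ^ 2 - ⟪s, t⟫) / (‖s - t‖ ^ 2 + lam ^ 2 * ‖t‖ ^ 2)) :
    γ * (‖s - t‖ ^ 2 + lam ^ 2 * ‖t‖ ^ 2) = lam * (‖s‖ ^ 2 + ‖t‖ ^ 2 - ⟪s, t⟫) ∧
      lam / (2 * (2 + lam ^ 2)) ≤ γ := by
  have hst1 : ‖s - t‖ ^ 2 = ‖s‖ ^ 2 - 2 * ⟪s, t⟫ + ‖t‖ ^ 2 := by
    rw [norm_sub_sq_real]
  have hst2 : (0:ℝ) ≤ ‖s + t‖ ^ 2 := by positivity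
  have hst3 : ‖s + t‖ ^ 2 = ‖s‖ ^ 2 + 2 * ⟪s, t⟫ + ‖t‖ ^ 2 := by
    rw [norm_add_sq_real]
  constructor
  · rw [hγdef, div_mul_cancel₀ _ (ne_of_gt hden)]
  · set c := lam / (2 * (2 + lam ^ 2)) with hcdef
    have hc0 : 0 ≤ c := by positivity
    have hc2 : c * (2 + lam ^ 2) = lam / 2 := by
      rw [hcdef]; field_simp
    set X := ‖s‖ ^ 2 + ‖t‖ ^ 2 with hX
    have hX0 : (0:ℝ) ≤ X := by positivity
    have hden_le : ‖s - t‖ ^ 2 + lam ^ 2 * ‖t‖ ^ 2 ≤ (2 + lam ^ 2) * X := by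
      have h1 : lam ^ 2 * ‖t‖ ^ 2 ≤ lam ^ 2 * X := by
        apply mul_le_mul_of_nonneg_left _ (sq_nonneg lam)
        rw [hX]; nlinarith [sq_nonneg (‖s‖ : ℝ)]
      nlinarith [hst1, hst2, hst3]
    have hnum_ge : lam / 2 * X ≤ lam * (‖s‖ ^ 2 + ‖t‖ ^ 2 - ⟪s, t⟫) := by
      have h2 : (⟪s, t⟫ : ℝ) ≤ X / 2 := by nlinarith [sq_nonneg (‖s - t‖ : ℝ), hst1]
      nlinarith [hlam.le]
    rw [hγdef, le_div_iff₀ hden]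
    calc c * (‖s - t‖ ^ 2 + lam ^ 2 * ‖t‖ ^ 2) ≤ c * ((2 + lam ^ 2) * X) :=
          mul_le_mul_of_nonneg_left hden_le hc0
      _ = lam / 2 * X := by rw [← mul_assoc, hc2]
      _ ≤ lam * (X - ⟪s, t⟫) := by rw [hX] at hnum_ge ⊢; exact hnum_ge

omit [FiniteDimensional ℝ E] [FiniteDimensional ℝ F] in
lemma fejer_step (lam ρb ρ γ : ℝ) (hlam : 0 < lam) (hρb1 : ρb < 1)
    (hρ : |1 - ρ| ≤ ρb) (Z W s t : F)
    (hden : 0 < ‖s - t‖ ^ 2 + lam ^ 2 * ‖t‖ ^ 2)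
    (hγ : γ * (‖s - t‖ ^ 2 + lam ^ 2 * ‖t‖ ^ 2) = lam * (‖s‖ ^ 2 + ‖t‖ ^ 2 - ⟪s, t⟫))
    (hγ0 : 0 ≤ γ)
    (hm1 : 0 ≤ ⟪Z + lam • s, W - s⟫)
    (hm2 : 0 ≤ ⟪Z + lam • (s - t), t - W⟫) :
    ‖Z + (ρ * γ) • (s - t)‖ ^ 2 + ‖W - (ρ * γ * lam) • t‖ ^ 2 ≤
      ‖Z‖ ^ 2 + ‖W‖ ^ 2 - (1 - ρb ^ 2) * γ ^ 2 * (‖s - t‖ ^ 2 + lam ^ 2 * ‖t‖ ^ 2) := by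
  have hρpos : 0 < ρ := by
    rcases abs_le.mp hρ with ⟨h1, h2⟩
    linarith
  -- expansions
  have e1 : (⟪Z + lam • s, W - s⟫ : ℝ) =
      ⟪Z, W⟫ - ⟪Z, s⟫ + lam * ⟪s, W⟫ - lam * ‖s‖ ^ 2 := by
    rw [inner_add_left, inner_sub_right, inner_sub_right, real_inner_smul_left,
      real_inner_smul_left, real_inner_self_eq_norm_sq]
    ring
  have e2 : (⟪Z + lam • (s - t), t - W⟫ : ℝ) =
      ⟪Z, t⟫ - ⟪Z, W⟫ + lam * ⟪s, t⟫ - lam * ‖t‖ ^ 2 - lam * ⟪s, W⟫ + lam * ⟪t, W⟫ := by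
    rw [inner_add_left, inner_sub_right, inner_sub_right, real_inner_smul_left,
      real_inner_smul_left, inner_sub_left, inner_sub_left, real_inner_self_eq_norm_sq]
    ring
  have hkey : lam * (‖s‖ ^ 2 + ‖t‖ ^ 2 - ⟪s, t⟫) ≤ -(⟪Z, s⟫ - ⟪Z, t⟫) + lam * ⟪t, W⟫ := by
    rw [e1] at hm1; rw [e2] at hm2; linarith
  have eg1 : ‖Z + (ρ * γ) • (s - t)‖ ^ 2 =
      ‖Z‖ ^ 2 + 2 * (ρ * γ) * (⟪Z, s⟫ - ⟪Z, t⟫) + (ρ * γ) ^ 2 * ‖s - t‖ ^ 2 := by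
    rw [norm_add_sq_real, real_inner_smul_right, inner_sub_right, norm_smul,
      mul_pow, Real.norm_eq_abs, sq_abs]
    ring
  have eg2 : ‖W - (ρ * γ * lam) • t‖ ^ 2 =
      ‖W‖ ^ 2 - 2 * (ρ * γ * lam) * ⟪W, t⟫ + (ρ * γ * lam) ^ 2 * ‖t‖ ^ 2 := by
    rw [norm_sub_sq_real, real_inner_smul_right, norm_smul, mul_pow, Real.norm_eq_abs, sq_abs]
    ring
  rw [eg1, eg2]
  have hcomm : (⟪W, t⟫ : ℝ) = ⟪t, W⟫ := real_inner_comm _ _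
  have hργ : 0 ≤ ρ * γ := mul_nonneg hρpos.le hγ0
  have k1 : 2 * (ρ * γ) * ((⟪Z, s⟫ - ⟪Z, t⟫) - lam * ⟪t, W⟫) ≤
      2 * (ρ * γ) * (-(γ * (‖s - t‖ ^ 2 + lam ^ 2 * ‖t‖ ^ 2))) := by
    apply mul_le_mul_of_nonneg_left _ (by positivity)
    rw [← hγ] at hkey
    linarith
  have k2 : (0:ℝ) ≤ (ρb ^ 2 - (1 - ρ) ^ 2) * (γ ^ 2 * (‖s - t‖ ^ 2 + lam ^ 2 * ‖t‖ ^ 2)) := by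
    apply mul_nonneg
    · nlinarith [sq_abs (1 - ρ), abs_nonneg (1 - ρ)]
    · positivity
  rw [hcomm]
  nlinarith [k1, k2]

omit [FiniteDimensional ℝ E] [FiniteDimensional ℝ F] in
lemma tendsto_zero_of_sq {φ : ℕ → F}
    (h : Filter.Tendsto (fun j => ‖φ j‖ ^ 2) Filter.atTop (nhds 0)) :
    Filter.Tendsto φ Filter.atTop (nhds 0) := by
  rw [tendsto_zero_iff_norm_tendsto_zero]
  have h2 := (Real.continuous_sqrt.tendsto 0).comp h
  rw [Real.sqrt_zero] at h2
  refine h2.congr fun j => ?_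
  simp [Real.sqrt_sq (norm_nonneg (φ j))]

end Helpers

set_option maxHeartbeats 2000000 in
/-- global convergence of the PMM (items (a)-(b)). -/
theorem pmm_global_convergence
    (m1 m2 n : ℕ)
    (f : EuclideanSpace ℝ (Fin m1) → EReal) (g : EuclideanSpace ℝ (Fin m2) → EReal)
    (hf : IsPCC f) (hg : IsPCC g)
    (M : EuclideanSpace ℝ (Fin m1) →ₗ[ℝ] EuclideanSpace ℝ (Fin n))
    (C : EuclideanSpace ℝ (Fin m2) →ₗ[ℝ] EuclideanSpace ℝ (Fin n))
    (d : EuclideanSpace ℝ (Fin n))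
    (lam : ℝ) (hlam : 0 < lam) (ρb : ℝ) (hρb : ρb ∈ Set.Ico (0 : ℝ) 1)
    (u : ℕ → EuclideanSpace ℝ (Fin m1)) (v : ℕ → EuclideanSpace ℝ (Fin m2))
    (z w x y : ℕ → EuclideanSpace ℝ (Fin n)) (γ ρ : ℕ → ℝ)
    (hv : ∀ k, 1 ≤ k → ∀ v' : EuclideanSpace ℝ (Fin m2),
      g (v k) + ((⟪z (k-1) + lam • w (k-1), C (v k) - d⟫ +
          lam / 2 * ‖C (v k) - d‖ ^ 2 : ℝ) : EReal) ≤
        g v' + ((⟪z (k-1) + lam • w (k-1), C v' - d⟫ +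
          lam / 2 * ‖C v' - d‖ ^ 2 : ℝ) : EReal))
    (hu : ∀ k, 1 ≤ k → ∀ u' : EuclideanSpace ℝ (Fin m1),
      f (u k) + ((⟪z (k-1) + lam • (C (v k) - d), M (u k)⟫ +
          lam / 2 * ‖M (u k)‖ ^ 2 : ℝ) : EReal) ≤
        f u' + ((⟪z (k-1) + lam • (C (v k) - d), M u'⟫ +
          lam / 2 * ‖M u'‖ ^ 2 : ℝ) : EReal))
    (hx : ∀ k, 1 ≤ k → x k = z (k-1) + lam • w (k-1) + lam • (C (v k) - d))
    (hy : ∀ k, 1 ≤ k → y k = x k - lam • (w (k-1) - M (u k)))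
    (hnz : ∀ k, 1 ≤ k → ‖M (u k) + C (v k) - d‖ + ‖M (u k) - w (k-1)‖ ≠ 0)
    (hγ : ∀ k, 1 ≤ k → γ k = (lam * ‖C (v k) - d + w (k-1)‖ ^ 2 +
        lam * ⟪d - C (v k) - M (u k), w (k-1) - M (u k)⟫) /
      (‖M (u k) + C (v k) - d‖ ^ 2 + lam ^ 2 * ‖M (u k) - w (k-1)‖ ^ 2))
    (hρ : ∀ k, 1 ≤ k → ρ k ∈ Set.Icc (1 - ρb) (1 + ρb))
    (hz : ∀ k, 1 ≤ k → z k = z (k-1) + (ρ k * γ k) • (M (u k) + C (v k) - d))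
    (hw : ∀ k, 1 ≤ k → w k = w (k-1) - (ρ k * γ k * lam) • (w (k-1) - M (u k)))
    (hsaddle : ∃ us vs zs, IsSaddle f g M C d us vs zs)
    (hA2 : (intrinsicInterior ℝ {ξ : EuclideanSpace ℝ (Fin m1) | fconj f ξ < ⊤} ∩
      Set.range (LinearMap.adjoint M)).Nonempty)
    (hA3 : (intrinsicInterior ℝ {ξ : EuclideanSpace ℝ (Fin m2) | fconj g ξ < ⊤} ∩
      Set.range (LinearMap.adjoint C)).Nonempty)
    :
    ∃ zs ws : EuclideanSpace ℝ (Fin n),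
      (∀ ζ : EuclideanSpace ℝ (Fin n),
        hOne f M zs + hTwo g C d zs ≤ hOne f M ζ + hTwo g C d ζ) ∧
      HasSubgrad (hOne f M) (-ws) zs ∧
      HasSubgrad (hTwo g C d) ws zs ∧
      Filter.Tendsto x Filter.atTop (nhds zs) ∧
      Filter.Tendsto (fun k => d - C (v k)) Filter.atTop (nhds ws) ∧
      Filter.Tendsto y Filter.atTop (nhds zs) ∧
      Filter.Tendsto (fun k => -(-(M (u k)))) Filter.atTop (nhds ws) ∧
      Filter.Tendsto z Filter.atTop (nhds zs) ∧
      Filter.Tendsto w Filter.atTop (nhds ws) ∧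
      Filter.Tendsto (fun k => M (u k) + C (v k) - d) Filter.atTop (nhds 0) ∧
      Filter.Tendsto (fun k => x k - y k) Filter.atTop (nhds 0) := by
  classical
  obtain ⟨hfbot, ⟨uP, huP⟩, _, hfconv⟩ := hf
  obtain ⟨hgbot, ⟨vP, hvP⟩, _, hgconv⟩ := hg
  obtain ⟨cuP, hcuP⟩ := ereal_real (hfbot uP) huP
  obtain ⟨cvP, hcvP⟩ := ereal_real (hgbot vP) hvP
  obtain ⟨us, vs, zs0, hsadTop, hsadBot, hsadMin, hsadMax⟩ := hsaddle
  -- Step 1 : analysis of the saddle point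
  have hfus_ne_top : f us ≠ ⊤ := by
    intro h
    apply hsadTop
    rw [Lag, h, EReal.top_add_of_ne_bot (hgbot vs), EReal.top_add_of_ne_bot (EReal.coe_ne_bot _)]
  have hgvs_ne_top : g vs ≠ ⊤ := by
    intro h
    apply hsadTop
    rw [Lag, h, EReal.add_top_of_ne_bot (hfbot us), EReal.top_add_of_ne_bot (EReal.coe_ne_bot _)]
  obtain ⟨cf, hcf⟩ := ereal_real (hfbot us) hfus_ne_top
  obtain ⟨cg, hcg⟩ := ereal_real (hgbot vs) hgvs_ne_top
  have hfsub : ∀ u', (cf : EReal) + ((⟪zs0, M us⟫ - ⟪zs0, M u'⟫ : ℝ) : EReal) ≤ f u' := by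
    intro u'
    have h := hsadMin u' vs
    rw [Lag, Lag, hcf, hcg] at h
    rcases ereal_tricho (f u') with h' | h' | ⟨cu, h'⟩
    · exact absurd h' (hfbot u')
    · rw [h']; exact le_top
    · rw [h'] at h ⊢
      have hr : cf + cg + ⟪M us + C vs - d, zs0⟫ ≤ cu + cg + ⟪M u' + C vs - d, zs0⟫ := by
        exact_mod_cast h
      have e1 : (⟪M us + C vs - d, zs0⟫ : ℝ) = ⟪M us, zs0⟫ + ⟪C vs, zs0⟫ - ⟪d, zs0⟫ := by
        rw [inner_sub_left, inner_add_left]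
      have e2 : (⟪M u' + C vs - d, zs0⟫ : ℝ) = ⟪M u', zs0⟫ + ⟪C vs, zs0⟫ - ⟪d, zs0⟫ := by
        rw [inner_sub_left, inner_add_left]
      have e3 : (⟪zs0, M us⟫ : ℝ) = ⟪M us, zs0⟫ := real_inner_comm _ _
      have e4 : (⟪zs0, M u'⟫ : ℝ) = ⟪M u', zs0⟫ := real_inner_comm _ _
      have hgoal : cf + (⟪zs0, M us⟫ - ⟪zs0, M u'⟫) ≤ cu := by linarith
      exact_mod_cast hgoal
  have hgsub : ∀ v', (cg : EReal) + ((⟪zs0, C vs⟫ - ⟪zs0, C v'⟫ : ℝ) : EReal) ≤ g v' := by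
    intro v'
    have h := hsadMin us v'
    rw [Lag, Lag, hcf, hcg] at h
    rcases ereal_tricho (g v') with h' | h' | ⟨cv, h'⟩
    · exact absurd h' (hgbot v')
    · rw [h']; exact le_top
    · rw [h'] at h ⊢
      have hr : cf + cg + ⟪M us + C vs - d, zs0⟫ ≤ cf + cv + ⟪M us + C v' - d, zs0⟫ := by
        exact_mod_cast h
      have e1 : (⟪M us + C vs - d, zs0⟫ : ℝ) = ⟪M us, zs0⟫ + ⟪C vs, zs0⟫ - ⟪d, zs0⟫ := by
        rw [inner_sub_left, inner_add_left]
      have e2 : (⟪M us + C v' - d, zs0⟫ : ℝ) = ⟪M us, zs0⟫ + ⟪C v', zs0⟫ - ⟪d, zs0⟫ := by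
        rw [inner_sub_left, inner_add_left]
      have e3 : (⟪zs0, C vs⟫ : ℝ) = ⟪C vs, zs0⟫ := real_inner_comm _ _
      have e4 : (⟪zs0, C v'⟫ : ℝ) = ⟪C v', zs0⟫ := real_inner_comm _ _
      have hgoal : cg + (⟪zs0, C vs⟫ - ⟪zs0, C v'⟫) ≤ cv := by linarith
      exact_mod_cast hgoal
  have hMCd : M us + C vs - d = 0 := by
    have h := hsadMax (zs0 + (M us + C vs - d))
    rw [Lag, Lag, hcf, hcg] at h
    have hr : cf + cg + ⟪M us + C vs - d, zs0 + (M us + C vs - d)⟫ ≤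
        cf + cg + ⟪M us + C vs - d, zs0⟫ := by
      exact_mod_cast h
    rw [inner_add_right] at hr
    have : (⟪M us + C vs - d, M us + C vs - d⟫ : ℝ) ≤ 0 := by linarith
    exact real_inner_self_nonpos.mp this
  obtain ⟨hOneVal0, hOneSub0⟩ := hOne_val_subgrad f M us zs0 cf hcf hfsub
  obtain ⟨hTwoVal0, hTwoSub0⟩ := hTwo_val_subgrad g C d vs zs0 cg hcg hgsub
  have hws0eq : M us = d - C vs := by
    rw [← sub_eq_zero]; rw [← hMCd]; abel
  have hOneSub0' : HasSubgrad (hOne f M) (-(d - C vs)) zs0 := by rwa [← hws0eq]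
  -- Step 2 : per-iteration quantities
  set S : ℕ → EuclideanSpace ℝ (Fin n) := fun j => C (v (j+1)) - d + w j with hSdef
  set T : ℕ → EuclideanSpace ℝ (Fin n) := fun j => w j - M (u (j+1)) with hTdef
  set Dn : ℕ → ℝ := fun j => ‖S j - T j‖ ^ 2 + lam ^ 2 * ‖T j‖ ^ 2 with hDndef
  have hone : ∀ j : ℕ, 1 ≤ j + 1 := fun j => Nat.le_add_left 1 j
  have hxj : ∀ j, x (j+1) = z j + lam • S j := by
    intro j
    have h := hx (j+1) (hone j)
    simp only [Nat.add_sub_cancel] at h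
    rw [h, hSdef]
    simp only [smul_add]
    module
  have hEj : ∀ j, M (u (j+1)) + C (v (j+1)) - d = S j - T j := by
    intro j
    simp only [hSdef, hTdef]
    module
  have hbj : ∀ j, d - C (v (j+1)) = w j - S j := by
    intro j; simp only [hSdef]; module
  have hMuj : ∀ j, M (u (j+1)) = w j - T j := by
    intro j; simp only [hTdef]; module
  have hMuwj : ∀ j, M (u (j+1)) - w j = -T j := by
    intro j; simp only [hTdef]; module
  have hyj : ∀ j, y (j+1) = z j + lam • (S j - T j) := by
    intro j
    have h := hy (j+1) (hone j)
    simp only [Nat.add_sub_cancel] at h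
    rw [h, hxj j]
    simp only [hSdef, hTdef]
    module
  have hden_pos : ∀ j, 0 < Dn j := by
    intro j
    have h := hnz (j+1) (hone j)
    simp only [Nat.add_sub_cancel] at h
    rw [hEj j, hMuwj j, norm_neg] at h
    rcases (norm_nonneg (S j - T j)).lt_or_eq with h3 | h3
    · have : (0:ℝ) < ‖S j - T j‖ ^ 2 := by positivity
      have h4 : (0:ℝ) ≤ lam ^ 2 * ‖T j‖ ^ 2 := by positivity
      rw [hDndef]; dsimp only; linarith
    · have h5 : 0 < ‖T j‖ := by
        rcases (norm_nonneg (T j)).lt_or_eq with h5 | h5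
        · exact h5
        · exact absurd (by rw [← h3, ← h5]; ring) h
      have : (0:ℝ) < lam ^ 2 * ‖T j‖ ^ 2 := by positivity
      have h4 : (0:ℝ) ≤ ‖S j - T j‖ ^ 2 := by positivity
      rw [hDndef]; dsimp only; linarith
  have hγj : ∀ j, γ (j+1) * Dn j = lam * (‖S j‖ ^ 2 + ‖T j‖ ^ 2 - ⟪S j, T j⟫) ∧
      lam / (2 * (2 + lam ^ 2)) ≤ γ (j+1) := by
    intro j
    apply gamma_facts lam (γ (j+1)) hlam (S j) (T j) (hden_pos j)
    have h := hγ (j+1) (hone j)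
    simp only [Nat.add_sub_cancel] at h
    rw [hEj j, hMuwj j, norm_neg] at h
    have e1 : C (v (j+1)) - d + w j = S j := rfl
    have e2 : w j - M (u (j+1)) = T j := rfl
    have e3 : d - C (v (j+1)) - M (u (j+1)) = T j - S j := by
      simp only [hSdef, hTdef]; module
    rw [e1, e2, e3] at h
    have e4 : lam * ‖S j‖ ^ 2 + lam * ⟪T j - S j, T j⟫ =
        lam * (‖S j‖ ^ 2 + ‖T j‖ ^ 2 - ⟪S j, T j⟫) := by
      rw [inner_sub_left, real_inner_self_eq_norm_sq]
      ring
    rw [e4] at h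
    exact h
  have hγpos : 0 < lam / (2 * (2 + lam ^ 2)) := by positivity
  -- Step 3 : subgradients generated at each iteration
  have key2 : ∀ j, ∃ c : ℝ, g (v (j+1)) = (c : EReal) ∧
      hTwo g C d (x (j+1)) = ((⟪d, x (j+1)⟫ - ⟪x (j+1), C (v (j+1))⟫ - c : ℝ) : EReal) ∧
      HasSubgrad (hTwo g C d) (d - C (v (j+1))) (x (j+1)) := by
    intro j
    have hmin := hv (j+1) (hone j)
    simp only [Nat.add_sub_cancel] at hmin
    have hne_top : g (v (j+1)) ≠ ⊤ := by
      intro h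
      have h2 := hmin vP
      rw [h, EReal.top_add_of_ne_bot (EReal.coe_ne_bot _), hcvP, ← EReal.coe_add] at h2
      exact absurd (top_le_iff.mp h2) (EReal.coe_ne_top _)
    obtain ⟨c, hc⟩ := ereal_real (hgbot _) hne_top
    refine ⟨c, hc, ?_⟩
    have hsubg := key_min g hgbot hgconv C d (z j + lam • w j) lam hlam (v (j+1)) c hc hmin
    apply hTwo_val_subgrad g C d (v (j+1)) (x (j+1)) c hc
    intro v'
    have h := hsubg v'
    have hxv := hx (j+1) (hone j)
    simp only [Nat.add_sub_cancel] at hxv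
    rw [← hxv, inner_sub_right] at h
    exact h
  have key1 : ∀ j, ∃ c : ℝ, f (u (j+1)) = (c : EReal) ∧
      hOne f M (y (j+1)) = ((-⟪y (j+1), M (u (j+1))⟫ - c : ℝ) : EReal) ∧
      HasSubgrad (hOne f M) (-(M (u (j+1)))) (y (j+1)) := by
    intro j
    have hmin0 := hu (j+1) (hone j)
    simp only [Nat.add_sub_cancel] at hmin0
    have hmin : ∀ u', f (u (j+1)) + ((⟪z j + lam • (C (v (j+1)) - d), M (u (j+1)) - 0⟫ +
        lam / 2 * ‖M (u (j+1)) - 0‖ ^ 2 : ℝ) : EReal) ≤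
        f u' + ((⟪z j + lam • (C (v (j+1)) - d), M u' - 0⟫ +
        lam / 2 * ‖M u' - 0‖ ^ 2 : ℝ) : EReal) := by
      intro u'
      simpa only [sub_zero] using hmin0 u'
    have hne_top : f (u (j+1)) ≠ ⊤ := by
      intro h
      have h2 := hmin uP
      rw [h, EReal.top_add_of_ne_bot (EReal.coe_ne_bot _), hcuP, ← EReal.coe_add] at h2
      exact absurd (top_le_iff.mp h2) (EReal.coe_ne_top _)
    obtain ⟨c, hc⟩ := ereal_real (hfbot _) hne_top
    refine ⟨c, hc, ?_⟩
    have hsubg := key_min f hfbot hfconv M 0 (z j + lam • (C (v (j+1)) - d)) lam hlam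
      (u (j+1)) c hc hmin
    apply hOne_val_subgrad f M (u (j+1)) (y (j+1)) c hc
    intro u'
    have h := hsubg u'
    have hyv : y (j+1) = z j + lam • (C (v (j+1)) - d) + lam • (M (u (j+1)) - 0) := by
      rw [hyj j]
      simp only [hSdef, hTdef, sub_zero]
      module
    rw [← hyv, inner_sub_right] at h
    exact h
  -- Step 4 : Fejér monotonicity w.r.t. any point of the extended solution set
  have hmono12 : ∀ (zb wb : EuclideanSpace ℝ (Fin n)) (c1 c2 : ℝ),
      hOne f M zb = (c1 : EReal) → hTwo g C d zb = (c2 : EReal) →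
      HasSubgrad (hOne f M) (-wb) zb → HasSubgrad (hTwo g C d) wb zb →
      ∀ j, 0 ≤ ⟪(z j - zb) + lam • S j, (w j - wb) - S j⟫ ∧
        0 ≤ ⟪(z j - zb) + lam • (S j - T j), T j - (w j - wb)⟫ := by
    intro zb wb c1 c2 hc1 hc2 hsub1 hsub2 j
    obtain ⟨c, hc, hval2, hsub2'⟩ := key2 j
    obtain ⟨c', hc', hval1, hsub1'⟩ := key1 j
    constructor
    · have h := subgrad_mono (hTwo g C d) hval2 hc2 hsub2' hsub2
      have e1 : x (j+1) - zb = (z j - zb) + lam • S j := by rw [hxj j]; module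
      have e2 : (d - C (v (j+1))) - wb = (w j - wb) - S j := by rw [hbj j]; module
      rwa [e1, e2] at h
    · have h := subgrad_mono (hOne f M) hval1 hc1 hsub1' hsub1
      have e1 : y (j+1) - zb = (z j - zb) + lam • (S j - T j) := by rw [hyj j]; module
      have e2 : -(M (u (j+1))) - (-wb) = T j - (w j - wb) := by rw [hMuj j]; module
      rwa [e1, e2] at h
  have hfejer : ∀ (zb wb : EuclideanSpace ℝ (Fin n)) (c1 c2 : ℝ),
      hOne f M zb = (c1 : EReal) → hTwo g C d zb = (c2 : EReal) →
      HasSubgrad (hOne f M) (-wb) zb → HasSubgrad (hTwo g C d) wb zb →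
      ∀ j, ‖z (j+1) - zb‖ ^ 2 + ‖w (j+1) - wb‖ ^ 2 ≤
        ‖z j - zb‖ ^ 2 + ‖w j - wb‖ ^ 2 - (1 - ρb ^ 2) * (γ (j+1)) ^ 2 * Dn j := by
    intro zb wb c1 c2 hc1 hc2 hsub1 hsub2 j
    obtain ⟨hm1, hm2⟩ := hmono12 zb wb c1 c2 hc1 hc2 hsub1 hsub2 j
    have hρj := hρ (j+1) (hone j)
    have habs : |1 - ρ (j+1)| ≤ ρb := by
      rw [abs_le]
      constructor <;> [linarith [hρj.2]; linarith [hρj.1]]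
    have hstep := fejer_step lam ρb (ρ (j+1)) (γ (j+1)) hlam hρb.2 habs
      (z j - zb) (w j - wb) (S j) (T j) (hden_pos j) (hγj j).1
      (le_trans hγpos.le (hγj j).2) hm1 hm2
    have e1 : z (j+1) - zb = (z j - zb) + (ρ (j+1) * γ (j+1)) • (S j - T j) := by
      have h := hz (j+1) (hone j)
      simp only [Nat.add_sub_cancel] at h
      rw [h, hEj j]
      module
    have e2 : w (j+1) - wb = (w j - wb) - (ρ (j+1) * γ (j+1) * lam) • T j := by
      have h := hw (j+1) (hone j)
      simp only [Nat.add_sub_cancel] at h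
      have eT : w j - M (u (j+1)) = T j := rfl
      rw [h, eT]
      module
    rw [e1, e2]
    exact hstep

  -- Part I : Fejér monotonicity with the saddle anchor
  have h1ρ : 0 < 1 - ρb ^ 2 := by nlinarith [hρb.1, hρb.2]
  set D : ℕ → ℝ := fun j => ‖z j - zs0‖ ^ 2 + ‖w j - (d - C vs)‖ ^ 2 with hDdef
  have hD0 : ∀ j, 0 ≤ D j := fun j => by positivity
  have hDstep : ∀ j, D (j+1) ≤ D j - (1 - ρb ^ 2) * (γ (j+1)) ^ 2 * Dn j :=
    fun j => hfejer zs0 (d - C vs) _ _ hOneVal0 hTwoVal0 hOneSub0' hTwoSub0 j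
  have hterm_nonneg : ∀ j, 0 ≤ (1 - ρb ^ 2) * (γ (j+1)) ^ 2 * Dn j := fun j =>
    mul_nonneg (mul_nonneg h1ρ.le (sq_nonneg _)) (hden_pos j).le
  have hDanti : Antitone D := antitone_nat_of_succ_le fun j => by
    have := hDstep j; have := hterm_nonneg j; linarith
  have hDbdd : BddBelow (Set.range D) := by
    refine ⟨0, ?_⟩
    rintro r ⟨j, rfl⟩
    exact hD0 j
  have hDlim := tendsto_atTop_ciInf hDanti hDbdd
  have hgap : Filter.Tendsto (fun j => D j - D (j+1)) Filter.atTop (nhds 0) := by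
    have h2 : Filter.Tendsto (fun j => D (j+1)) Filter.atTop (nhds (⨅ i, D i)) :=
      hDlim.comp (Filter.tendsto_add_atTop_nat 1)
    have h3 := hDlim.sub h2
    simpa using h3
  set cc : ℝ := (1 - ρb ^ 2) * (lam / (2 * (2 + lam ^ 2))) ^ 2 with hccdef
  have hcc : 0 < cc := mul_pos h1ρ (pow_pos hγpos 2)
  have hDnle : ∀ j, Dn j ≤ (D j - D (j+1)) / cc := by
    intro j
    rw [le_div_iff₀ hcc, hccdef]
    have h1 : (lam / (2 * (2 + lam ^ 2))) ^ 2 ≤ (γ (j+1)) ^ 2 :=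
      pow_le_pow_left₀ hγpos.le (hγj j).2 2
    have h2 := hDstep j
    have h3 := (hden_pos j).le
    have h4 := mul_le_mul_of_nonneg_left h1 (mul_nonneg h1ρ.le h3)
    generalize hq : lam / (2 * (2 + lam ^ 2)) = q at h4 ⊢
    nlinarith [h2, h4]
  have hDn0 : Filter.Tendsto Dn Filter.atTop (nhds 0) := by
    apply squeeze_zero (fun j => (hden_pos j).le) hDnle
    simpa using hgap.div_const cc
  -- limits of S and T
  have hSTsq : Filter.Tendsto (fun j => ‖S j - T j‖ ^ 2) Filter.atTop (nhds 0) := by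
    apply squeeze_zero (fun j => by positivity) (fun j => ?_) hDn0
    have : 0 ≤ lam ^ 2 * ‖T j‖ ^ 2 := by positivity
    rw [hDndef]; dsimp only; linarith
  have hTsq : Filter.Tendsto (fun j => ‖T j‖ ^ 2) Filter.atTop (nhds 0) := by
    apply squeeze_zero (fun j => by positivity) (fun j => ?_)
      (by simpa using hDn0.div_const (lam ^ 2))
    rw [le_div_iff₀ (by positivity : (0:ℝ) < lam ^ 2)]
    have : 0 ≤ ‖S j - T j‖ ^ 2 := by positivity
    rw [hDndef]; dsimp only; nlinarith
  have hST0 : Filter.Tendsto (fun j => S j - T j) Filter.atTop (nhds 0) :=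
    tendsto_zero_of_sq hSTsq
  have hT0 : Filter.Tendsto T Filter.atTop (nhds 0) := tendsto_zero_of_sq hTsq
  have hS0 : Filter.Tendsto S Filter.atTop (nhds 0) := by
    have h := hST0.add hT0
    rw [add_zero] at h
    exact h.congr fun j => by module
  -- extraction of a convergent subsequence of (z, w)
  have hPmem : ∀ j, ((z j, w j) : EuclideanSpace ℝ (Fin n) × EuclideanSpace ℝ (Fin n)) ∈
      Metric.closedBall ((zs0, d - C vs)) (Real.sqrt (D 0)) := by
    intro j
    rw [Metric.mem_closedBall, Prod.dist_eq]
    have hzb : dist (z j) zs0 ≤ Real.sqrt (D 0) := by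
      rw [dist_eq_norm, ← Real.sqrt_sq (norm_nonneg (z j - zs0))]
      apply Real.sqrt_le_sqrt
      refine le_trans ?_ (hDanti (Nat.zero_le j))
      rw [hDdef]; dsimp only
      have h2 : 0 ≤ ‖w j - (d - C vs)‖ ^ 2 := by positivity
      linarith
    have hwb : dist (w j) (d - C vs) ≤ Real.sqrt (D 0) := by
      rw [dist_eq_norm, ← Real.sqrt_sq (norm_nonneg (w j - (d - C vs)))]
      apply Real.sqrt_le_sqrt
      refine le_trans ?_ (hDanti (Nat.zero_le j))
      rw [hDdef]; dsimp only
      have h2 : 0 ≤ ‖z j - zs0‖ ^ 2 := by positivity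
      linarith
    exact max_le hzb hwb
  obtain ⟨⟨zst, wst⟩, -, φ, hφmono, hφlim⟩ :=
    (isCompact_closedBall _ _).tendsto_subseq hPmem
  have hφat : Filter.Tendsto φ Filter.atTop Filter.atTop := hφmono.tendsto_atTop
  have hzφ : Filter.Tendsto (fun j => z (φ j)) Filter.atTop (nhds zst) :=
    (continuous_fst.tendsto _).comp hφlim
  have hwφ : Filter.Tendsto (fun j => w (φ j)) Filter.atTop (nhds wst) :=
    (continuous_snd.tendsto _).comp hφlim
  have hSφ := hS0.comp hφat
  have hTφ := hT0.comp hφat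
  have hSTφ := hST0.comp hφat
  -- x (φ j + 1) and its limit
  have hχ2 : Filter.Tendsto (fun j => x (φ j + 1)) Filter.atTop (nhds zst) := by
    have h := hzφ.add (hSφ.const_smul lam)
    rw [smul_zero, add_zero] at h
    exact h.congr fun j => (hxj (φ j)).symm
  have hβ2 : Filter.Tendsto (fun j => d - C (v (φ j + 1))) Filter.atTop (nhds wst) := by
    have h := hwφ.sub hSφ
    rw [sub_zero] at h
    exact h.congr fun j => (hbj (φ j)).symm
  have hχ1 : Filter.Tendsto (fun j => y (φ j + 1)) Filter.atTop (nhds zst) := by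
    have h := hzφ.add (hSTφ.const_smul lam)
    rw [smul_zero, add_zero] at h
    exact h.congr fun j => (hyj (φ j)).symm
  have hβ1 : Filter.Tendsto (fun j => -(M (u (φ j + 1)))) Filter.atTop (nhds (-wst)) := by
    have h := hTφ.sub hwφ
    rw [zero_sub] at h
    simp only [Function.comp] at h
    refine h.congr fun j => ?_
    rw [hMuj (φ j), neg_sub]
  -- the cluster point lies in the extended solution set
  have hsub2st : HasSubgrad (hTwo g C d) wst zst := by
    apply subgrad_limit (hTwo g C d) (fun x' => hTwo_ne_bot g hcvP C d x') hχ2 hβ2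
    · intro b hb
      exact hχ2.eventually (hTwo_lsc_at g hgbot hcvP C d zst b hb)
    · exact fun j => (key2 (φ j)).choose_spec.2.2
  have hsub1st : HasSubgrad (hOne f M) (-wst) zst := by
    apply subgrad_limit (hOne f M) (fun x' => fconj_ne_bot f hcuP _) hχ1 hβ1
    · intro b hb
      exact hχ1.eventually (hOne_lsc_at f hfbot M zst b hb)
    · exact fun j => (key1 (φ j)).choose_spec.2.2
  -- finiteness of the values at the cluster point
  obtain ⟨c2st, hc2st⟩ : ∃ c : ℝ, hTwo g C d zst = (c : EReal) := by
    obtain ⟨c, -, hval, -⟩ := key2 0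
    have h := hsub2st (x (0 + 1))
    rw [hval] at h
    obtain ⟨cz, hcz, -⟩ := ereal_add_coe_le (hTwo_ne_bot g hcvP C d zst) h
    exact ⟨cz, hcz⟩
  obtain ⟨c1st, hc1st⟩ : ∃ c : ℝ, hOne f M zst = (c : EReal) := by
    obtain ⟨c, -, hval, -⟩ := key1 0
    have h := hsub1st (y (0 + 1))
    rw [hval] at h
    obtain ⟨cz, hcz, -⟩ := ereal_add_coe_le (fconj_ne_bot f hcuP _) h
    exact ⟨cz, hcz⟩
  -- Part II : Fejér monotonicity with the cluster-point anchor
  set D' : ℕ → ℝ := fun j => ‖z j - zst‖ ^ 2 + ‖w j - wst‖ ^ 2 with hD'def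
  have hD'step : ∀ j, D' (j+1) ≤ D' j - (1 - ρb ^ 2) * (γ (j+1)) ^ 2 * Dn j :=
    fun j => hfejer zst wst _ _ hc1st hc2st hsub1st hsub2st j
  have hD'anti : Antitone D' := antitone_nat_of_succ_le fun j => by
    have := hD'step j; have := hterm_nonneg j; linarith
  have hD'0 : ∀ j, 0 ≤ D' j := fun j => by positivity
  have hD'lim := tendsto_atTop_ciInf hD'anti
    (⟨0, by rintro r ⟨j, rfl⟩; exact hD'0 j⟩ : BddBelow (Set.range D'))
  have hD'sub : Filter.Tendsto (fun j => D' (φ j)) Filter.atTop (nhds 0) := by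
    have h1 : Filter.Tendsto (fun j => z (φ j) - zst) Filter.atTop (nhds 0) := by
      have := hzφ.sub (tendsto_const_nhds (x := zst))
      rwa [sub_self] at this
    have h2 : Filter.Tendsto (fun j => w (φ j) - wst) Filter.atTop (nhds 0) := by
      have := hwφ.sub (tendsto_const_nhds (x := wst))
      rwa [sub_self] at this
    have h3 : Filter.Tendsto (fun j => ‖z (φ j) - zst‖ ^ 2) Filter.atTop (nhds 0) := by
      have := (h1.norm.pow 2)
      simpa using this
    have h4 : Filter.Tendsto (fun j => ‖w (φ j) - wst‖ ^ 2) Filter.atTop (nhds 0) := by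
      have := (h2.norm.pow 2)
      simpa using this
    have := h3.add h4
    rw [add_zero] at this
    exact this
  have hinf0 : (⨅ j, D' j) = 0 := tendsto_nhds_unique (hD'lim.comp hφat) hD'sub
  rw [hinf0] at hD'lim
  -- convergence of the whole sequences
  have hzlim : Filter.Tendsto z Filter.atTop (nhds zst) := by
    rw [← tendsto_sub_nhds_zero_iff]
    apply tendsto_zero_of_sq
    apply squeeze_zero (fun j => by positivity) (fun j => ?_) hD'lim
    have : 0 ≤ ‖w j - wst‖ ^ 2 := by positivity
    rw [hD'def]; dsimp only; linarith
  have hwlim : Filter.Tendsto w Filter.atTop (nhds wst) := by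
    rw [← tendsto_sub_nhds_zero_iff]
    apply tendsto_zero_of_sq
    apply squeeze_zero (fun j => by positivity) (fun j => ?_) hD'lim
    have : 0 ≤ ‖z j - zst‖ ^ 2 := by positivity
    rw [hD'def]; dsimp only; linarith
  -- assembling the conclusion
  refine ⟨zst, wst, ?_, hsub1st, hsub2st, ?_, ?_, ?_, ?_, hzlim, hwlim, ?_, ?_⟩
  · -- dual optimality
    intro ζ
    rw [hc1st, hc2st, ← EReal.coe_add]
    rcases ereal_tricho (hOne f M ζ) with h1 | h1 | ⟨q1, h1⟩
    · exact absurd h1 (fconj_ne_bot f hcuP _)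
    · rw [h1, EReal.top_add_of_ne_bot (hTwo_ne_bot g hcvP C d ζ)]; exact le_top
    · rcases ereal_tricho (hTwo g C d ζ) with h2 | h2 | ⟨q2, h2⟩
      · exact absurd h2 (hTwo_ne_bot g hcvP C d ζ)
      · rw [h2, EReal.add_top_of_ne_bot (by rw [h1]; exact EReal.coe_ne_bot _)]; exact le_top
      · rw [h1, h2, ← EReal.coe_add, EReal.coe_le_coe_iff]
        have i1 := hsub1st ζ
        rw [hc1st, h1, ← EReal.coe_add, EReal.coe_le_coe_iff] at i1
        have i2 := hsub2st ζ
        rw [hc2st, h2, ← EReal.coe_add, EReal.coe_le_coe_iff] at i2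
        have e : (⟪-wst, ζ - zst⟫ : ℝ) = -⟪wst, ζ - zst⟫ := by
          rw [inner_neg_left]
        linarith
  · -- x → zst
    refine (Filter.tendsto_add_atTop_iff_nat 1).mp ?_
    have h := hzlim.add (hS0.const_smul lam)
    rw [smul_zero, add_zero] at h
    exact h.congr fun j => (hxj j).symm
  · -- d - C (v k) → wst
    refine (Filter.tendsto_add_atTop_iff_nat 1).mp ?_
    have h := hwlim.sub hS0
    rw [sub_zero] at h
    exact h.congr fun j => (hbj j).symm
  · -- y → zst
    refine (Filter.tendsto_add_atTop_iff_nat 1).mp ?_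
    have h := hzlim.add (hST0.const_smul lam)
    rw [smul_zero, add_zero] at h
    exact h.congr fun j => (hyj j).symm
  · -- -(-(M (u k))) → wst
    refine (Filter.tendsto_add_atTop_iff_nat 1).mp ?_
    have h := hwlim.sub hT0
    rw [sub_zero] at h
    refine h.congr fun j => ?_
    rw [neg_neg, hMuj j]
  · -- residual → 0
    refine (Filter.tendsto_add_atTop_iff_nat 1).mp ?_
    exact hST0.congr fun j => (hEj j).symm
  · -- x - y → 0
    refine (Filter.tendsto_add_atTop_iff_nat 1).mp ?_
    have h := hT0.const_smul lam
    rw [smul_zero] at h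
    refine h.congr fun j => ?_
    rw [hxj j, hyj j]
    module
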